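/- arXiv:1407.1181 — 3 statements merged into one kernel-verified Lean document; each statement's English description precedes it below -/
import Mathlib

section
/- Suppose f : D → ℝ is observed at x₁,…,xₙ with values yᵢ = f(xᵢ), and f ∈ ALB(m,σ), i.e., there exists an m-Lipschitz g with ‖f − g‖_∞ ≤ σ. Define H^lower(x) = max_i (yᵢ − m‖x − xᵢ‖) − σ' and H^upper(x) = min_i (yᵢ + m‖x − xᵢ‖) + σ', where σ' = σ for x not among the observed points and σ' = 0 otherwise (with signs so that H^lower is a lower bound and H^upper an upper bound). Then H^lower(x) ≤ f(x) ≤ H^upper(x) for all x ∈ D. -/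
open scoped Classical

/-- Envelope bounds for a function in `ALB(m, σ)` observed (exactly, i.e. agreeing with the
Lipschitz approximant) at points `xs 0, …, xs n`. -/
theorem stmt_9 (d n : ℕ) (D : Set (EuclideanSpace ℝ (Fin d)))
    (f g : EuclideanSpace ℝ (Fin d) → ℝ) (m σ : ℝ) (hm : 0 ≤ m) (hσ : 0 ≤ σ)
    (hg : ∀ x ∈ D, ∀ y ∈ D, |g x - g y| ≤ m * ‖x - y‖)
    (hfg : ∀ x ∈ D, |f x - g x| ≤ σ)
    (xs : Fin (n + 1) → EuclideanSpace ℝ (Fin d)) (hxs : ∀ i, xs i ∈ D)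
    (hobs : ∀ i, f (xs i) = g (xs i)) :
    ∀ x ∈ D,
      (Finset.univ.sup' Finset.univ_nonempty (fun i => f (xs i) - m * ‖x - xs i‖))
          - (if x ∈ Set.range xs then 0 else σ) ≤ f x ∧
      f x ≤ (Finset.univ.inf' Finset.univ_nonempty (fun i => f (xs i) + m * ‖x - xs i‖))
          + (if x ∈ Set.range xs then 0 else σ) := by
  intro x hx
  have key : ∀ i : Fin (n + 1),
      f (xs i) - m * ‖x - xs i‖ - (if x ∈ Set.range xs then 0 else σ) ≤ f x ∧
      f x ≤ f (xs i) + m * ‖x - xs i‖ + (if x ∈ Set.range xs then 0 else σ) := by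
    intro i
    have hgi := hg x hx (xs i) (hxs i)
    have h1 : g x - g (xs i) ≤ m * ‖x - xs i‖ := (abs_le.mp hgi).2
    have h2 : -(m * ‖x - xs i‖) ≤ g x - g (xs i) := (abs_le.mp hgi).1
    have hob := hobs i
    by_cases hr : x ∈ Set.range xs
    · simp only [hr, if_pos]
      obtain ⟨j, hj⟩ := hr
      have hfx : f x = g x := by rw [← hj]; exact hobs j
      constructor <;> rw [hfx, hob] <;> linarith
    · simp only [hr, if_neg, if_false]
      have hfx := abs_le.mp (hfg x hx)
      constructor <;> rw [hob] <;> [linarith [hfx.1]; linarith [hfx.2]]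
  constructor
  · rw [sub_le_iff_le_add]
    apply Finset.sup'_le
    intro i _
    have := (key i).1
    linarith
  · rw [← sub_le_iff_le_add]
    apply Finset.le_inf'
    intro i _
    have := (key i).2
    linarith
end

section
/- For f(x) = Mx on [a,b], the inverse LB-BD function satisfies γ_f^{-1}(σ) = max{0, M − 2σ/(b−a)}, i.e., the smallest Lipschitz constant achievable within sup-norm distance σ of a linear function of slope M > 0 is M − 2σ/(b−a) (or 0 if σ ≥ M(b−a)/2). -/
/-- Inverse LB-BD function: smallest Lipschitz constant achievable within sup-norm
distance `σ` of `f`. -/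
noncomputable def gammaInv (a b : ℝ) (f : ℝ → ℝ) (σ : ℝ) : ℝ :=
  sInf {m : ℝ | 0 ≤ m ∧ ∃ g : ℝ → ℝ,
    (∀ x ∈ Set.Icc a b, ∀ y ∈ Set.Icc a b, |g x - g y| ≤ m * |x - y|) ∧
    ∀ x ∈ Set.Icc a b, |f x - g x| ≤ σ}

/-- For `f(x) = Mx` on `[a,b]`: `γ_f⁻¹(σ) = max {0, M - 2σ/(b-a)}`. -/
theorem stmt_15 (a b M σ : ℝ) (hab : a < b) (hM : 0 < M) (hσ : 0 ≤ σ) :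
    gammaInv a b (fun x => M * x) σ = max 0 (M - 2 * σ / (b - a)) := by
  have hba : (0:ℝ) < b - a := by linarith
  set c : ℝ := max 0 (M - 2 * σ / (b - a)) with hc
  have hc0 : 0 ≤ c := le_max_left _ _
  have hcM : c ≤ M := by
    apply max_le hM.le
    have : 0 ≤ 2 * σ / (b - a) := by positivity
    linarith
  have hcge : M - 2 * σ / (b - a) ≤ c := le_max_right _ _
  -- membership of c
  have hmem : c ∈ {m : ℝ | 0 ≤ m ∧ ∃ g : ℝ → ℝ,
      (∀ x ∈ Set.Icc a b, ∀ y ∈ Set.Icc a b, |g x - g y| ≤ m * |x - y|) ∧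
      ∀ x ∈ Set.Icc a b, |(fun x => M * x) x - g x| ≤ σ} := by
    refine ⟨hc0, fun x => c * x + (M - c) * ((a + b) / 2), ?_, ?_⟩
    · intro x hx y hy
      have : c * x + (M - c) * ((a + b) / 2) - (c * y + (M - c) * ((a + b) / 2))
          = c * (x - y) := by ring
      rw [this, abs_mul, abs_of_nonneg hc0]
    · intro x hx
      obtain ⟨hxa, hxb⟩ := hx
      have h1 : M * x - (c * x + (M - c) * ((a + b) / 2)) = (M - c) * (x - (a + b) / 2) := by
        ring
      rw [h1, abs_mul, abs_of_nonneg (by linarith : (0:ℝ) ≤ M - c)]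
      have h2 : |x - (a + b) / 2| ≤ (b - a) / 2 := by
        rw [abs_le]; constructor <;> linarith
      have h3 : (M - c) * |x - (a + b) / 2| ≤ (M - c) * ((b - a) / 2) :=
        mul_le_mul_of_nonneg_left h2 (by linarith)
      have h4 : (M - c) * ((b - a) / 2) ≤ σ := by
        have h5 : M - c ≤ 2 * σ / (b - a) := by linarith
        have h6 : (M - c) * ((b - a) / 2) ≤ (2 * σ / (b - a)) * ((b - a) / 2) :=
          mul_le_mul_of_nonneg_right h5 (by linarith)
        have h7 : (2 * σ / (b - a)) * ((b - a) / 2) = σ := by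
          field_simp
        linarith
      linarith
  -- lower bound
  have hlb : ∀ m ∈ {m : ℝ | 0 ≤ m ∧ ∃ g : ℝ → ℝ,
      (∀ x ∈ Set.Icc a b, ∀ y ∈ Set.Icc a b, |g x - g y| ≤ m * |x - y|) ∧
      ∀ x ∈ Set.Icc a b, |(fun x => M * x) x - g x| ≤ σ}, c ≤ m := by
    rintro m ⟨hm0, g, hLip, hclose⟩
    have ha : a ∈ Set.Icc a b := ⟨le_refl a, hab.le⟩
    have hb : b ∈ Set.Icc a b := ⟨hab.le, le_refl b⟩
    have h1 := hLip b hb a ha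
    have h2 := hclose a ha
    have h3 := hclose b hb
    simp only at h2 h3
    have hba' : |b - a| = b - a := abs_of_pos hba
    rw [hba'] at h1
    have e1 : g b - g a ≤ m * (b - a) := (abs_le.mp h1).2
    have e2 : M * a - g a ≤ σ ∧ -(σ) ≤ M * a - g a := by
      constructor
      · exact (abs_le.mp h2).2
      · exact (abs_le.mp h2).1
    have e3 : M * b - g b ≤ σ := (abs_le.mp h3).2
    -- M*(b-a) = (M*b - g b) + (g b - g a) + (g a - M*a) ≤ σ + m(b-a) + σ
    have key : M * (b - a) ≤ m * (b - a) + 2 * σ := by nlinarith [e2.2]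
    have : M - 2 * σ / (b - a) ≤ m := by
      have h9 : (M - m) * (b - a) ≤ 2 * σ := by linarith
      have h10 : M - m ≤ 2 * σ / (b - a) := (le_div_iff₀ hba).mpr h9
      linarith
    exact max_le hm0 this
  apply le_antisymm
  · exact csInf_le ⟨c, fun m hm => hlb m hm⟩ hmem
  · exact le_csInf ⟨c, hmem⟩ hlb
end

section
/- For f(x) = M|x − (a+b)/2| on [a,b], the inverse LB-BD function satisfies γ_f^{-1}(σ) = max{0, M − 4σ/(b−a)}. -/
/-- For `f(x) = M|x - (a+b)/2|` on `[a,b]`: `γ_f⁻¹(σ) = max {0, M - 4σ/(b-a)}`. -/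
theorem stmt_16 (a b M σ : ℝ) (hab : a < b) (hM : 0 < M) (hσ : 0 ≤ σ) :
    gammaInv a b (fun x => M * |x - (a + b) / 2|) σ = max 0 (M - 4 * σ / (b - a)) := by
  have hba : (0:ℝ) < b - a := by linarith
  set c : ℝ := (a + b) / 2 with hc
  set t : ℝ := 4 * σ / (b - a) with ht
  have ht0 : 0 ≤ t := div_nonneg (by linarith) hba.le
  set m : ℝ := max 0 (M - t) with hm
  have hm0 : 0 ≤ m := le_max_left _ _
  have hmM : M - m ≤ t := by have := le_max_right 0 (M - t); linarith
  have hMm : 0 ≤ M - m := by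
    have : m ≤ M := max_le hM.le (by linarith)
    linarith
  have ht2 : t * ((b - a) / 2) = 2 * σ := by
    rw [ht]; field_simp; ring
  unfold gammaInv
  have hmem : m ∈ {m : ℝ | 0 ≤ m ∧ ∃ g : ℝ → ℝ,
      (∀ x ∈ Set.Icc a b, ∀ y ∈ Set.Icc a b, |g x - g y| ≤ m * |x - y|) ∧
      ∀ x ∈ Set.Icc a b, |(fun x => M * |x - (a + b) / 2|) x - g x| ≤ σ} := by
    refine ⟨hm0, fun x => m * |x - c| + σ, ?_, ?_⟩
    · intro x _ y _
      have h1 : (m * |x - c| + σ) - (m * |y - c| + σ) = m * (|x - c| - |y - c|) := by ring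
      rw [h1, abs_mul, abs_of_nonneg hm0]
      have := abs_abs_sub_abs_le_abs_sub (x - c) (y - c)
      rw [show x - c - (y - c) = x - y by ring] at this
      exact mul_le_mul_of_nonneg_left this hm0
    · intro x hx
      obtain ⟨hx1, hx2⟩ := hx
      have hxc : |x - c| ≤ (b - a) / 2 := by
        rw [abs_le, hc]; constructor <;> linarith
      simp only
      have hd : M * |x - c| - (m * |x - c| + σ) = (M - m) * |x - c| - σ := by ring
      rw [show x - (a + b) / 2 = x - c from rfl, hd, abs_le]
      constructor
      · have : 0 ≤ (M - m) * |x - c| := mul_nonneg hMm (abs_nonneg _)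
        linarith
      · have h1 : (M - m) * |x - c| ≤ t * ((b - a) / 2) :=
          mul_le_mul hmM hxc (abs_nonneg _) ht0
        linarith
  apply le_antisymm
  · exact csInf_le ⟨0, fun n hn => hn.1⟩ hmem
  · apply le_csInf ⟨m, hmem⟩
    rintro n ⟨hn0, g, hlip, happ⟩
    apply max_le hn0
    have ha : a ∈ Set.Icc a b := ⟨le_refl a, hab.le⟩
    have hcm : c ∈ Set.Icc a b := ⟨by simp only [hc]; linarith, by simp only [hc]; linarith⟩
    have h1 := happ a ha
    have h2 := happ c hcm
    have h3 := hlip a ha c hcm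
    have hac : |a - c| = (b - a) / 2 := by
      rw [hc, abs_of_nonpos (by linarith)]; ring
    simp only [hac] at h1 h3
    simp only [show c - (a+b)/2 = (0:ℝ) by rw [hc]; ring, abs_zero, mul_zero, zero_sub,
      abs_neg] at h2
    have e1 := abs_le.mp h1
    have e2 := abs_le.mp h2
    have e3 := abs_le.mp h3
    have key : (M - n) * (b - a) ≤ 4 * σ := by nlinarith
    have : M - n ≤ t := by
      rw [ht, le_div_iff₀ hba]; linarith [key]
    linarith
end
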